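/- arXiv:1604.03099 — 4 statements merged into one kernel-verified Lean document; each statement's English description precedes it below -/
import Mathlib

section
/- The configuration α(x₁,x₂,x₃) = ψ(−x₁ + x₂ + x₃) is not expressible as a binary composition: there exist points in [0,1]³ witnessing that α differs from each of ψ(x₃ + ψ(−x₁ + x₂)), ψ(−1 + x₃ + ψ(1 − x₁ + x₂)), and ψ(−x₁ + ψ(x₂ + x₃)). -/
/-- The truncated identity activation function. -/
def psi (x : ℝ) : ℝ := min 1 (max 0 x)

theorem unrepresentable_configuration :
    (∃ x₁ ∈ Set.Icc (0:ℝ) 1, ∃ x₂ ∈ Set.Icc (0:ℝ) 1, ∃ x₃ ∈ Set.Icc (0:ℝ) 1,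
      psi (-x₁ + x₂ + x₃) ≠ psi (x₃ + psi (-x₁ + x₂))) ∧
    (∃ x₁ ∈ Set.Icc (0:ℝ) 1, ∃ x₂ ∈ Set.Icc (0:ℝ) 1, ∃ x₃ ∈ Set.Icc (0:ℝ) 1,
      psi (-x₁ + x₂ + x₃) ≠ psi (-1 + x₃ + psi (1 - x₁ + x₂))) ∧
    (∃ x₁ ∈ Set.Icc (0:ℝ) 1, ∃ x₂ ∈ Set.Icc (0:ℝ) 1, ∃ x₃ ∈ Set.Icc (0:ℝ) 1,
      psi (-x₁ + x₂ + x₃) ≠ psi (-x₁ + psi (x₂ + x₃))) := by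
  refine ⟨⟨1, by norm_num, 0, by norm_num, 1, by norm_num, by norm_num [psi]⟩,
    ⟨0, by norm_num, 1, by norm_num, 0, by norm_num, by norm_num [psi]⟩,
    ⟨1, by norm_num, 1, by norm_num, 1, by norm_num, by norm_num [psi]⟩⟩
end

section
/- Rewriting rule soundness for disjunctions: if b = b₀ + b₁ with b₁ ≤ b₀, and both the outer and inner neuron outputs lie strictly between saturation for some input (non-constancy), then in general ψ(b + w₁x₁ + ⋯ + wₙxₙ) = ψ(b₀ + w₁x₁ + ⋯ + w_{n−1}x_{n−1} + ψ(b₁ + wₙxₙ)) holds for all xᵢ ∈ [0,1] when the neuron is a disjunction (b = number of negative weights) or a conjunction (b = −p+1 with p positive weights), with weights wᵢ ∈ {−1, 1}. -/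
/-- Soundness of the rewriting rule R splitting a conjunctive or disjunctive neuron. -/
theorem rule_R_soundness (n : ℕ) (hn : 1 ≤ n) (w : Fin (n + 1) → ℝ)
    (hw : ∀ i, w i = -1 ∨ w i = 1) (b₀ b₁ : ℤ) (hb : b₁ ≤ b₀)
    -- the neuron is a conjunction (bias = -p+1) or a disjunction (bias = number of
    -- negative weights), where p is the number of positive weights
    (hkind : (b₀ + b₁ : ℝ) = (Finset.univ.filter (fun i => w i = -1)).card ∨
             (b₀ + b₁ : ℝ) = -((Finset.univ.filter (fun i => w i = 1)).card : ℝ) + 1)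
    -- non-constancy of the inner neuron
    (hinner : ∃ x ∈ Set.Icc (0:ℝ) 1,
      0 < psi ((b₁ : ℝ) + w (Fin.last n) * x) ∧ psi ((b₁ : ℝ) + w (Fin.last n) * x) < 1)
    -- non-constancy of the outer neuron
    (houter : ∃ x : Fin (n + 1) → ℝ, (∀ i, x i ∈ Set.Icc (0:ℝ) 1) ∧
      0 < psi ((b₀ + b₁ : ℝ) + ∑ i, w i * x i) ∧
      psi ((b₀ + b₁ : ℝ) + ∑ i, w i * x i) < 1) :
    ∀ x : Fin (n + 1) → ℝ, (∀ i, x i ∈ Set.Icc (0:ℝ) 1) →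
      psi ((b₀ + b₁ : ℝ) + ∑ i, w i * x i) =
      psi ((b₀ : ℝ) + (∑ i : Fin n, w i.castSucc * x i.castSucc) +
        psi ((b₁ : ℝ) + w (Fin.last n) * x (Fin.last n))) := by
  obtain ⟨x0, hx0, hpos, hlt⟩ := hinner
  simp only [psi, lt_min_iff, lt_max_iff] at hpos
  have hgt : 0 < (b₁ : ℝ) + w (Fin.last n) * x0 := by
    rcases hpos.2 with h | h
    · exact absurd h (lt_irrefl 0)
    · exact h
  have hlt' : (b₁ : ℝ) + w (Fin.last n) * x0 < 1 := by
    simp only [psi, min_lt_iff, max_lt_iff] at hlt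
    rcases hlt with h | h
    · exact absurd h (lt_irrefl 1)
    · exact h.2
  intro x hx
  have hy := hx (Fin.last n)
  -- inner psi is the identity on [0,1] inputs
  have hpsi : psi ((b₁ : ℝ) + w (Fin.last n) * x (Fin.last n)) =
      (b₁ : ℝ) + w (Fin.last n) * x (Fin.last n) := by
    rcases hw (Fin.last n) with hwn | hwn <;> rw [hwn] at hgt hlt' ⊢
    · -- w = -1 : then 0 < b₁ - x0 < 1 with x0 ∈ [0,1] forces b₁ = 1
      have hb1 : b₁ = 1 := by
        have h1 : (0 : ℝ) < b₁ := by nlinarith [hx0.1, hx0.2]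
        have h2 : (b₁ : ℝ) < 2 := by nlinarith [hx0.1, hx0.2]
        have h1' : (0 : ℤ) < b₁ := by exact_mod_cast h1
        have h2' : b₁ < 2 := by exact_mod_cast h2
        omega
      subst hb1
      unfold psi
      rw [max_eq_right (by push_cast; nlinarith [hy.1, hy.2]),
        min_eq_right (by push_cast; nlinarith [hy.1, hy.2])]
    · -- w = 1 : then 0 < b₁ + x0 < 1 with x0 ∈ [0,1] forces b₁ = 0
      have hb1 : b₁ = 0 := by
        have h1 : (-1 : ℝ) < b₁ := by nlinarith [hx0.1, hx0.2]
        have h2 : (b₁ : ℝ) < 1 := by nlinarith [hx0.1, hx0.2]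
        have h1' : (-1 : ℤ) < b₁ := by exact_mod_cast h1
        have h2' : b₁ < 1 := by exact_mod_cast h2
        omega
      subst hb1
      unfold psi
      rw [max_eq_right (by push_cast; nlinarith [hy.1, hy.2]),
        min_eq_right (by push_cast; nlinarith [hy.1, hy.2])]
  rw [hpsi, Fin.sum_univ_castSucc]
  congr 1
  push_cast
  ring
end

section
/- Conjunctive neuron characterization: let the neuron have n negative-weight inputs x₁,…,xₙ and p positive-weight inputs x_{n+1},…,x_{n+p} with bias b = −p + 1. Then for all inputs in [0,1], ψ(b − x₁ − ⋯ − xₙ + x_{n+1} + ⋯ + x_{n+p}) = ¬x₁ ⊗ ⋯ ⊗ ¬xₙ ⊗ x_{n+1} ⊗ ⋯ ⊗ x_{n+p}. -/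
/-- A neuron with `n` negative weights, `p` positive weights and bias `-p+1` computes
`¬x₁ ⊗ ⋯ ⊗ ¬xₙ ⊗ y₁ ⊗ ⋯ ⊗ y_p`, the multi-ary Łukasiewicz conjunction. -/
theorem conjunctive_neuron_characterization (n p : ℕ) (hnp : 1 ≤ n + p)
    (x : Fin n → ℝ) (y : Fin p → ℝ)
    (hx : ∀ i, x i ∈ Set.Icc (0:ℝ) 1) (hy : ∀ j, y j ∈ Set.Icc (0:ℝ) 1) :
    psi ((-(p : ℝ) + 1) - (∑ i, x i) + ∑ j, y j) =
    max 0 ((∑ i, (1 - x i)) + (∑ j, y j) - ((n : ℝ) + (p : ℝ) - 1)) := by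
  have hxs : (0:ℝ) ≤ ∑ i, x i := Finset.sum_nonneg fun i _ => (hx i).1
  have hys : (∑ j, y j) ≤ (p : ℝ) := by
    calc (∑ j, y j) ≤ ∑ _j : Fin p, (1:ℝ) := Finset.sum_le_sum fun j _ => (hy j).2
    _ = p := by simp
  have hE : ((-(p : ℝ) + 1) - (∑ i, x i) + ∑ j, y j) ≤ 1 := by linarith
  have hE' : (∑ i, (1 - x i)) + (∑ j, y j) - ((n : ℝ) + (p : ℝ) - 1)
      = ((-(p : ℝ) + 1) - (∑ i, x i) + ∑ j, y j) := by
    simp [Finset.sum_sub_distrib]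
    ring
  rw [hE', psi, min_eq_right (max_le zero_le_one hE)]
end

section
/- Disjunctive neuron characterization: let the neuron have n negative-weight inputs and p positive-weight inputs with bias b = n. Then for all inputs in [0,1], ψ(n − x₁ − ⋯ − xₙ + x_{n+1} + ⋯ + x_{n+p}) = ¬x₁ ⊕ ⋯ ⊕ ¬xₙ ⊕ x_{n+1} ⊕ ⋯ ⊕ x_{n+p}. -/
/-- A neuron with `n` negative weights, `p` positive weights and bias `n` computes
`¬x₁ ⊕ ⋯ ⊕ ¬xₙ ⊕ y₁ ⊕ ⋯ ⊕ y_p`, the multi-ary Łukasiewicz disjunction. -/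
theorem disjunctive_neuron_characterization (n p : ℕ) (hnp : 1 ≤ n + p)
    (x : Fin n → ℝ) (y : Fin p → ℝ)
    (hx : ∀ i, x i ∈ Set.Icc (0:ℝ) 1) (hy : ∀ j, y j ∈ Set.Icc (0:ℝ) 1) :
    psi ((n : ℝ) - (∑ i, x i) + ∑ j, y j) =
    min 1 ((∑ i, (1 - x i)) + ∑ j, y j) := by
  have h1 : (∑ i, (1 - x i)) = (n : ℝ) - ∑ i, x i := by
    rw [Finset.sum_sub_distrib]; simp
  have h2 : (0:ℝ) ≤ ∑ i, (1 - x i) :=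
    Finset.sum_nonneg fun i _ => by linarith [(hx i).2]
  have h3 : (0:ℝ) ≤ ∑ j, y j := Finset.sum_nonneg fun j _ => (hy j).1
  rw [psi, ← h1, max_eq_right (by linarith)]
end
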